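/- The Schrödinger algebra S_2 admits a non-trivial Hom-Lie structure: the linear map ℜ on S_2 determined by ℜ(s_{12}) = z and ℜ vanishing on the other basis elements is not a scalar multiple of the identity map and satisfies the Hom-Jacobi identity [ℜ(x), [y, w]] + [ℜ(y), [w, x]] + [ℜ(w), [x, y]] = 0 for all x, y, w ∈ S_2. -/

import Mathlib

noncomputable section

open Submodule

/-- Index type for the standard basis
`{e, f, h, z, x_i, y_i (1 ≤ i ≤ n), s_{jk} (1 ≤ j < k ≤ n)}`
of the Schrödinger algebra `S_n` (indices shifted to start from `0`). -/
inductive SIdx (n : ℕ) : Type where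
  | E : SIdx n
  | F : SIdx n
  | H : SIdx n
  | Z : SIdx n
  | X : Fin n → SIdx n
  | Y : Fin n → SIdx n
  | S : (j k : Fin n) → j < k → SIdx n

/-- Kronecker delta with values in `ℂ`. -/
def kd {n : ℕ} (i j : Fin n) : ℂ := if i = j then 1 else 0

variable {n : ℕ} {L : Type*} [LieRing L] [LieAlgebra ℂ L]

/-- The element `s_{jk}` for arbitrary indices, with the convention
`s_{kj} = -s_{jk}` and `s_{jj} = 0`. -/
def sg (b : Module.Basis (SIdx n) ℂ L) (j k : Fin n) : L :=
  if h : j < k then b (.S j k h)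
  else if h' : k < j then - b (.S k j h')
  else 0

/-- A basis of a complex Lie algebra indexed by `SIdx n` realizes the
Schrödinger algebra `S_n` if the brackets of basis vectors are as follows
(all brackets of basis vectors not determined by the relations below and
anticommutativity are zero). -/
structure IsSchrodinger (b : Module.Basis (SIdx n) ℂ L) : Prop where
  lie_e_f : ⁅b .E, b .F⁆ = b .H
  lie_h_e : ⁅b .H, b .E⁆ = (2 : ℂ) • b .E
  lie_f_h : ⁅b .F, b .H⁆ = (2 : ℂ) • b .F
  lie_x_y : ∀ i j, ⁅b (.X i), b (.Y j)⁆ = kd i j • b .Z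
  lie_x_x : ∀ i j, ⁅b (.X i), b (.X j)⁆ = 0
  lie_y_y : ∀ i j, ⁅b (.Y i), b (.Y j)⁆ = 0
  lie_h_x : ∀ i, ⁅b .H, b (.X i)⁆ = b (.X i)
  lie_h_y : ∀ i, ⁅b .H, b (.Y i)⁆ = - b (.Y i)
  lie_e_y : ∀ i, ⁅b .E, b (.Y i)⁆ = b (.X i)
  lie_e_x : ∀ i, ⁅b .E, b (.X i)⁆ = 0
  lie_f_x : ∀ i, ⁅b .F, b (.X i)⁆ = b (.Y i)
  lie_f_y : ∀ i, ⁅b .F, b (.Y i)⁆ = 0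
  lie_z : ∀ u : SIdx n, ⁅b .Z, b u⁆ = 0
  lie_s_x : ∀ j k i, ⁅sg b j k, b (.X i)⁆ = kd k i • b (.X j) - kd j i • b (.X k)
  lie_s_y : ∀ j k i, ⁅sg b j k, b (.Y i)⁆ = kd k i • b (.Y j) - kd j i • b (.Y k)
  lie_s_s : ∀ j k l m, ⁅sg b j k, sg b l m⁆ =
      kd l k • sg b j m + kd j m • sg b k l + kd m k • sg b l j + kd l j • sg b m k
  lie_e_s : ∀ j k, ⁅b .E, sg b j k⁆ = 0
  lie_f_s : ∀ j k, ⁅b .F, sg b j k⁆ = 0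
  lie_h_s : ∀ j k, ⁅b .H, sg b j k⁆ = 0

/-- A `1/2`-derivation of a complex Lie algebra: a linear map `φ` with
`φ([x,y]) = (1/2)([φ(x),y] + [x,φ(y)])`. -/
def IsHalfDeriv (φ : L →ₗ[ℂ] L) : Prop :=
  ∀ x y : L, φ ⁅x, y⁆ = (2⁻¹ : ℂ) • (⁅φ x, y⁆ + ⁅x, φ y⁆)

/-- The set of basis vectors spanning the even part `(S_n)₀`:
`{e, f, h, z, s_{kl}}`. -/
def evenSet (b : Module.Basis (SIdx n) ℂ L) : Set L :=
  {v | v = b .E ∨ v = b .F ∨ v = b .H ∨ v = b .Z ∨ ∃ j k, ∃ h : j < k, v = b (.S j k h)}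

/-- The set of basis vectors spanning the odd part `(S_n)₁`: `{x_i, y_i}`. -/
def oddSet (b : Module.Basis (SIdx n) ℂ L) : Set L :=
  {v | ∃ i : Fin n, v = b (.X i) ∨ v = b (.Y i)}

/-- The linear map `ℜ` sending `s_{jk}` to `z` and all other basis vectors to `0`. -/
def Rmap (b : Module.Basis (SIdx n) ℂ L) : L →ₗ[ℂ] L :=
  b.constr ℂ fun u => match u with
    | .S _ _ _ => b .Z
    | _ => 0

/-- The Schrödinger algebra `S₂` admits a non-trivial
Hom-Lie structure: the map `ℜ` (with `ℜ(s₁₂) = z` and `ℜ` vanishing on the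
other basis vectors) is not a scalar multiple of the identity and satisfies the
Hom-Jacobi identity. -/
theorem S2_admits_nontrivial_HomLie_structure
    (L : Type*) [LieRing L] [LieAlgebra ℂ L]
    (b : Module.Basis (SIdx 2) ℂ L) (hb : IsSchrodinger b) :
    (¬ ∃ c : ℂ, Rmap b = c • LinearMap.id) ∧
    (∀ x y w : L,
      ⁅Rmap b x, ⁅y, w⁆⁆ + ⁅Rmap b y, ⁅w, x⁆⁆ + ⁅Rmap b w, ⁅x, y⁆⁆ = 0) := by
  have hz : ∀ w : L, ⁅b .Z, w⁆ = 0 := by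
    intro w
    have h1 : (LieAlgebra.ad ℂ L (b .Z)) = (0 : L →ₗ[ℂ] L) := by
      apply b.ext
      intro u
      simpa [LieAlgebra.ad_apply] using hb.lie_z u
    simpa [LieAlgebra.ad_apply] using LinearMap.congr_fun h1 w
  have key : ∀ (x v : L), ⁅Rmap b x, v⁆ = 0 := by
    intro x v
    have hx : x ∈ Submodule.span ℂ (Set.range b) := by rw [b.span_eq]; trivial
    induction hx using Submodule.span_induction with
    | mem w hw =>
      obtain ⟨u, rfl⟩ := hw
      cases u <;> simp [Rmap, Module.Basis.constr_basis, hz]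
    | zero => simp
    | add a c _ _ ha hc => rw [map_add, add_lie, ha, hc, add_zero]
    | smul r a _ ha => rw [map_smul, smul_lie, ha, smul_zero]
  constructor
  · rintro ⟨c, hc⟩
    have hE : Rmap b (b .E) = 0 := by simp [Rmap, Module.Basis.constr_basis]
    have h2 : c • b .E = 0 := by
      simpa [hE] using (LinearMap.congr_fun hc (b .E)).symm
    have hc0 : c = 0 := by
      rcases smul_eq_zero.mp h2 with h | h
      · exact h
      · exact absurd h (b.ne_zero _)
    have h01 : (0 : Fin 2) < 1 := by decide
    have hS : Rmap b (b (.S 0 1 h01)) = b .Z := by simp [Rmap, Module.Basis.constr_basis]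
    have := LinearMap.congr_fun hc (b (.S 0 1 h01))
    rw [hS, hc0] at this
    simp at this
    exact b.ne_zero _ this
  · intro x y w
    simp [key]
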